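/- Let (ℬ, 𝒜, e, l, i) be a cleft extension of abelian categories. Then the functor i : ℬ ⥤ 𝒜 is fully faithful and exact (it preserves short exact sequences). -/

import Mathlib

/-!
A cleft extension `(ℬ, 𝒜, e, l, i)` of abelian categories consists of abelian categories
`𝒜` and `ℬ` together with functors `i : ℬ ⥤ 𝒜`, `e : 𝒜 ⥤ ℬ` and `l : ℬ ⥤ 𝒜` such that:
(a) `e` is faithful and exact; (b) `(l, e)` is an adjoint pair;
(c) there is a natural isomorphism `e ∘ i ≅ Id_ℬ`.

STATEMENT: the functor `i : ℬ ⥤ 𝒜` is fully faithful and exact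
(it preserves short exact sequences).
-/

open CategoryTheory CategoryTheory.Limits

universe v v' u u'

/-- A cleft extension of abelian categories. -/
structure CleftExtension (B : Type u) (A : Type u') [Category.{v} B] [Category.{v'} A]
    [Abelian B] [Abelian A] where
  /-- the inclusion functor -/
  i : B ⥤ A
  /-- the quotient functor -/
  e : A ⥤ B
  /-- the left adjoint of `e` -/
  l : B ⥤ A
  e_faithful : e.Faithful
  e_preservesFiniteLimits : PreservesFiniteLimits e
  e_preservesFiniteColimits : PreservesFiniteColimits e
  /-- `(l, e)` is an adjoint pair -/
  adj : l ⊣ e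
  /-- `e ∘ i` is naturally isomorphic to the identity functor of `B` -/
  iso : i ⋙ e ≅ 𝟭 B

/-- A functor between abelian categories preserves short exact sequences. -/
def PreservesShortExactSequences {B : Type u} {A : Type u'} [Category.{v} B] [Category.{v'} A]
    [Abelian B] [Abelian A] (F : B ⥤ A) : Prop :=
  ∀ S : ShortComplex B, S.ShortExact →
    ∃ w : F.map S.f ≫ F.map S.g = 0, (ShortComplex.mk (F.map S.f) (F.map S.g) w).ShortExact

/-- In a cleft extension `(ℬ, 𝒜, e, l, i)` of abelian categories, the functor `i : ℬ ⥤ 𝒜`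
is fully faithful and exact (it preserves short exact sequences). -/
theorem cleftExtension_i_fullyFaithful_exact {B : Type u} {A : Type u'}
    [Category.{v} B] [Category.{v'} A] [Abelian B] [Abelian A]
    (ce : CleftExtension B A) :
    ce.i.Full ∧ ce.i.Faithful ∧ PreservesShortExactSequences ce.i := by
  have hef : ce.e.Faithful := ce.e_faithful
  have hel : PreservesFiniteLimits ce.e := ce.e_preservesFiniteLimits
  have hec : PreservesFiniteColimits ce.e := ce.e_preservesFiniteColimits
  have hz : ce.e.PreservesZeroMorphisms := by infer_instance
  have hH : ce.e.PreservesHomology := by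
    apply Functor.preservesHomology_of_preservesEpis_and_kernels
  have hcomp_full : (ce.i ⋙ ce.e).Full := Functor.Full.of_iso ce.iso.symm
  have hcomp_faithful : (ce.i ⋙ ce.e).Faithful := Functor.Faithful.of_iso ce.iso.symm
  have hfull : ce.i.Full := Functor.Full.of_comp_faithful ce.i ce.e
  have hfaithful : ce.i.Faithful := Functor.Faithful.of_comp ce.i ce.e
  refine ⟨hfull, hfaithful, ?_⟩
  intro S hS
  -- key conjugation formula
  have emap : ∀ {X Y : B} (f : X ⟶ Y),
      ce.e.map (ce.i.map f) = ce.iso.hom.app X ≫ f ≫ ce.iso.inv.app Y := by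
    intro X Y f
    have := ce.iso.hom.naturality f
    simp only [Functor.comp_map, Functor.id_map] at this
    rw [← Category.assoc, ← this]
    simp
  -- `i` preserves zero morphisms
  have izero : ∀ {X Y : B}, ce.i.map (0 : X ⟶ Y) = 0 := by
    intro X Y
    apply ce.e.map_injective
    rw [emap, ce.e.map_zero]
    simp
  have w : ce.i.map S.f ≫ ce.i.map S.g = 0 := by
    rw [← ce.i.map_comp, S.zero, izero]
  refine ⟨w, ?_⟩
  set S' : ShortComplex A := ShortComplex.mk (ce.i.map S.f) (ce.i.map S.g) w with hS'
  -- the image of S' under e is isomorphic to S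
  have eiso : S'.map ce.e ≅ S := by
    refine ShortComplex.isoMk (ce.iso.app S.X₁) (ce.iso.app S.X₂) (ce.iso.app S.X₃) ?_ ?_
    · dsimp [S']
      show _ = ce.e.map (ce.i.map S.f) ≫ _; rw [emap]
      simp
      rfl
    · dsimp [S']
      show _ = ce.e.map (ce.i.map S.g) ≫ _; rw [emap]
      simp
      rfl
  have hmono : Mono (ce.e.map S'.f) := by
    have := hS.mono_f
    have : Mono (ce.iso.hom.app S.X₁ ≫ S.f ≫ ce.iso.inv.app S.X₂) := by
      apply mono_comp
    show Mono (ce.e.map (ce.i.map S.f)); rw [emap]; exact this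
  have hepi : Epi (ce.e.map S'.g) := by
    have := hS.epi_g
    have : Epi (ce.iso.hom.app S.X₂ ≫ S.g ≫ ce.iso.inv.app S.X₃) := by
      apply epi_comp
    show Epi (ce.e.map (ce.i.map S.g)); rw [emap]; exact this
  have m : Mono S'.f := ce.e.mono_of_mono_map hmono
  have ep : Epi S'.g := ce.e.epi_of_epi_map hepi
  exact { exact := by
            rw [← S'.exact_map_iff_of_faithful ce.e]
            exact ShortComplex.exact_of_iso eiso.symm hS.exact }
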